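/- arXiv:math/9907209 — 3 statements merged into one kernel-verified Lean document; each statement's English description precedes it below -/
import Mathlib

section
/- Let G be a complete normed abelian group such that every continuous path γ : [0,1] → G of finite length is constant. Then for every N ≥ 1, every compactly supported G-valued Borel measure on ℝ^N with finite total variation is purely atomic, i.e., there is a countable set S ⊆ ℝ^N such that ν(B \ S) = 0 for every Borel set B. (This is the implication (2) ⟹ (1) of Theorem 7.1 in the case k = 0, expressed in measure language via Theorem 2.2; it is the 0-dimensional rectifiability theorem for coefficient groups with no nonconstant rectifiable paths.) -/
open MeasureTheory Set

open ENNReal NNReal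

/-- A `G`-valued vector measure has finite total variation: there is `C < ∞` such that
`∑ᵢ ‖ν(Sᵢ)‖ ≤ C` for every countable family of pairwise disjoint Borel sets. -/
def HasFiniteTotalVariation {X : Type*} [MeasurableSpace X] {G : Type*} [NormedAddCommGroup G]
    (ν : VectorMeasure X G) : Prop :=
  ∃ C : ℝ, ∀ S : ℕ → Set X, (∀ i, MeasurableSet (S i)) →
    Pairwise (Function.onFun Disjoint S) →
    ∀ n : ℕ, ∑ i ∈ Finset.range n, ‖ν (S i)‖ ≤ C

/-- `ν` is compactly supported: there is a compact `K` with `ν B = 0` for every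
Borel `B` disjoint from `K`. -/
def CompactlySupported {X : Type*} [MeasurableSpace X] [TopologicalSpace X]
    {G : Type*} [NormedAddCommGroup G] (ν : VectorMeasure X G) : Prop :=
  ∃ K : Set X, IsCompact K ∧ ∀ B : Set X, MeasurableSet B → Disjoint B K → ν B = 0

/-- `ν` is purely atomic: there is a countable set `S` with `ν (B \ S) = 0` for every
Borel `B`. -/
def PurelyAtomic {X : Type*} [MeasurableSpace X] {G : Type*} [NormedAddCommGroup G]
    (ν : VectorMeasure X G) : Prop :=
  ∃ S : Set X, S.Countable ∧ ∀ B : Set X, MeasurableSet B → ν (B \ S) = 0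

/-- `γ` has finite length on `[a, b]`: the sums `∑ ‖γ(tᵢ₊₁) - γ(tᵢ)‖` over all partitions
`a = t₀ ≤ t₁ ≤ ⋯ ≤ t_m = b` are bounded. -/
def FiniteLengthOn {G : Type*} [NormedAddCommGroup G] (γ : ℝ → G) (a b : ℝ) : Prop :=
  ∃ C : ℝ, ∀ (m : ℕ) (t : ℕ → ℝ), Monotone t → t 0 = a → t m = b →
    ∑ i ∈ Finset.range m, ‖γ (t (i + 1)) - γ (t i)‖ ≤ C


noncomputable section

namespace VarAux

variable {X : Type*} [MeasurableSpace X] {G : Type*} [NormedAddCommGroup G]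

/-- Admissible lists for the variation of `ν` inside `A`. -/
def Adm (ν : VectorMeasure X G) (A : Set X) (l : List (Set X)) : Prop :=
  (∀ s ∈ l, MeasurableSet s) ∧ (∀ s ∈ l, s ⊆ A) ∧ l.Pairwise Disjoint

def lsum (ν : VectorMeasure X G) (l : List (Set X)) : ℝ≥0∞ :=
  (l.map fun s => (‖ν s‖₊ : ℝ≥0∞)).sum

lemma adm_nil (ν : VectorMeasure X G) (A : Set X) : Adm ν A [] :=
  ⟨by simp, by simp, List.Pairwise.nil⟩

instance (ν : VectorMeasure X G) (A : Set X) : Nonempty {l : List (Set X) // Adm ν A l} :=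
  ⟨⟨[], adm_nil ν A⟩⟩

/-- The variation of `ν` on `A`. -/
def vfn (ν : VectorMeasure X G) (A : Set X) : ℝ≥0∞ :=
  ⨆ l : {l : List (Set X) // Adm ν A l}, lsum ν (l : List (Set X))

lemma lsum_le_vfn (ν : VectorMeasure X G) {A : Set X} {l : List (Set X)} (h : Adm ν A l) :
    lsum ν l ≤ vfn ν A :=
  le_iSup (fun l : {l : List (Set X) // Adm ν A l} => lsum ν (l : List (Set X))) ⟨l, h⟩

lemma vfn_le {ν : VectorMeasure X G} {A : Set X} {c : ℝ≥0∞}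
    (h : ∀ l, Adm ν A l → lsum ν l ≤ c) : vfn ν A ≤ c :=
  iSup_le fun l => h l l.2

lemma nnnorm_le_vfn (ν : VectorMeasure X G) {A : Set X} (hA : MeasurableSet A) :
    (‖ν A‖₊ : ℝ≥0∞) ≤ vfn ν A := by
  have := lsum_le_vfn ν (A := A) (l := [A])
    ⟨by simpa using hA, by simp, List.pairwise_singleton _ _⟩
  simpa [lsum] using this

lemma vfn_mono (ν : VectorMeasure X G) {A B : Set X} (h : A ⊆ B) : vfn ν A ≤ vfn ν B :=
  vfn_le fun l hl => lsum_le_vfn ν ⟨hl.1, fun s hs => (hl.2.1 s hs).trans h, hl.2.2⟩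

lemma vfn_empty (ν : VectorMeasure X G) : vfn ν (∅ : Set X) = 0 := by
  refine le_antisymm (vfn_le fun l hl => ?_) (by positivity)
  have : ∀ x ∈ l.map fun s => (‖ν s‖₊ : ℝ≥0∞), x = 0 := by
    intro x hx
    rcases List.mem_map.1 hx with ⟨s, hs, rfl⟩
    have : s = ∅ := subset_empty_iff.1 (hl.2.1 s hs)
    simp [this]
  simp [lsum, List.sum_eq_zero this]

lemma vfn_union_le (ν : VectorMeasure X G) {A B : Set X} (h : Disjoint A B) :
    vfn ν A + vfn ν B ≤ vfn ν (A ∪ B) := by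
  refine ENNReal.iSup_add_iSup_le fun l₁ l₂ => ?_
  have hadm : Adm ν (A ∪ B) ((l₁ : List (Set X)) ++ (l₂ : List (Set X))) := by
    refine ⟨?_, ?_, ?_⟩
    · intro s hs
      rcases List.mem_append.1 hs with hs | hs
      · exact l₁.2.1 s hs
      · exact l₂.2.1 s hs
    · intro s hs
      rcases List.mem_append.1 hs with hs | hs
      · exact (l₁.2.2.1 s hs).trans subset_union_left
      · exact (l₂.2.2.1 s hs).trans subset_union_right
    · refine List.pairwise_append.2 ⟨l₁.2.2.2, l₂.2.2.2, fun s hs t ht => ?_⟩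
      exact h.mono (l₁.2.2.1 s hs) (l₂.2.2.1 t ht)
  have := lsum_le_vfn ν hadm
  simpa [lsum, List.sum_append] using this

lemma vfn_biUnion_le (ν : VectorMeasure X G) {f : ℕ → Set X}
    (hd : Pairwise (Function.onFun Disjoint f)) (F : Finset ℕ) :
    ∑ i ∈ F, vfn ν (f i) ≤ vfn ν (⋃ i ∈ F, f i) := by
  classical
  induction F using Finset.induction_on with
  | empty => simp
  | @insert a F ha ih =>
    rw [Finset.sum_insert ha, Finset.set_biUnion_insert]
    refine le_trans ?_ (vfn_union_le ν ?_)
    · exact add_le_add le_rfl ih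
    · rw [Set.disjoint_iUnion₂_right]
      intro i hi
      exact hd (fun hai => ha (hai ▸ hi))

lemma list_sum_tsum_comm (F : Set X → ℕ → ℝ≥0∞) (l : List (Set X)) :
    (l.map fun s => ∑' i, F s i).sum = ∑' i, (l.map fun s => F s i).sum := by
  induction l with
  | nil => simp
  | cons a l ih => simp [ih, ENNReal.tsum_add]

lemma nnnorm_le_tsum (ν : VectorMeasure X G) {s : Set X} (hs : MeasurableSet s)
    {f : ℕ → Set X} (hm : ∀ i, MeasurableSet (f i)) (hd : Pairwise (Function.onFun Disjoint f))
    (hsub : s ⊆ ⋃ i, f i) :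
    (‖ν s‖₊ : ℝ≥0∞) ≤ ∑' i, (‖ν (s ∩ f i)‖₊ : ℝ≥0∞) := by
  have hsum : HasSum (fun i => ν (s ∩ f i)) (ν s) := by
    have h1 : ∀ i, MeasurableSet (s ∩ f i) := fun i => hs.inter (hm i)
    have h2 : Pairwise (Function.onFun Disjoint fun i => s ∩ f i) := by
      intro i j hij
      exact Disjoint.mono inter_subset_right inter_subset_right (hd hij)
    have h3 : (⋃ i, s ∩ f i) = s := by
      rw [← Set.inter_iUnion]
      exact Set.inter_eq_left.2 hsub
    simpa [h3] using ν.m_iUnion h1 h2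
  by_cases hS : Summable fun i => ‖ν (s ∩ f i)‖
  · have h1 : ‖ν s‖ ≤ ∑' i, ‖ν (s ∩ f i)‖ := by
      rw [← hsum.tsum_eq]
      exact norm_tsum_le_tsum_norm hS
    calc (‖ν s‖₊ : ℝ≥0∞) = ENNReal.ofReal ‖ν s‖ := (ofReal_norm_eq_enorm _).symm
      _ ≤ ENNReal.ofReal (∑' i, ‖ν (s ∩ f i)‖) := ENNReal.ofReal_le_ofReal h1
      _ = ∑' i, ENNReal.ofReal ‖ν (s ∩ f i)‖ :=
          ENNReal.ofReal_tsum_of_nonneg (fun i => norm_nonneg _) hS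
      _ = ∑' i, (‖ν (s ∩ f i)‖₊ : ℝ≥0∞) := by
          simp [ofReal_norm_eq_enorm, enorm_eq_nnnorm]
  · have : (∑' i, ((‖ν (s ∩ f i)‖₊ : ℝ≥0) : ℝ≥0∞)) = ∞ := by
      by_contra h
      exact hS (by simpa [← NNReal.summable_coe] using ENNReal.tsum_coe_ne_top_iff_summable.1 h)
    rw [this]
    exact le_top

lemma vfn_iUnion_le (ν : VectorMeasure X G) {f : ℕ → Set X}
    (hm : ∀ i, MeasurableSet (f i)) (hd : Pairwise (Function.onFun Disjoint f)) :
    vfn ν (⋃ i, f i) ≤ ∑' i, vfn ν (f i) := by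
  refine vfn_le fun l hl => ?_
  calc lsum ν l ≤ (l.map fun s => ∑' i, (‖ν (s ∩ f i)‖₊ : ℝ≥0∞)).sum := by
        refine List.sum_le_sum fun s hs => ?_
        exact nnnorm_le_tsum ν (hl.1 s hs) hm hd (hl.2.1 s hs)
    _ = ∑' i, (l.map fun s => (‖ν (s ∩ f i)‖₊ : ℝ≥0∞)).sum :=
        list_sum_tsum_comm _ l
    _ ≤ ∑' i, vfn ν (f i) := by
        refine ENNReal.tsum_le_tsum fun i => ?_
        have hadm : Adm ν (f i) (l.map (· ∩ f i)) := by
          refine ⟨?_, ?_, ?_⟩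
          · intro t ht
            rcases List.mem_map.1 ht with ⟨s, hs, rfl⟩
            exact (hl.1 s hs).inter (hm i)
          · intro t ht
            rcases List.mem_map.1 ht with ⟨s, hs, rfl⟩
            exact inter_subset_right
          · exact List.Pairwise.map _ (fun a b hab =>
              hab.mono inter_subset_left inter_subset_left) hl.2.2
        have := lsum_le_vfn ν hadm
        simpa [lsum, List.map_map, Function.comp_def] using this

lemma vfn_iUnion (ν : VectorMeasure X G) {f : ℕ → Set X}
    (hm : ∀ i, MeasurableSet (f i)) (hd : Pairwise (Function.onFun Disjoint f)) :
    vfn ν (⋃ i, f i) = ∑' i, vfn ν (f i) := by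
  refine le_antisymm (vfn_iUnion_le ν hm hd) ?_
  rw [ENNReal.tsum_eq_iSup_sum]
  refine iSup_le fun F => ?_
  exact (vfn_biUnion_le ν hd F).trans (vfn_mono ν (Set.iUnion₂_subset fun i _ => Set.subset_iUnion f i))

/-- The total variation measure. -/
def varMeasure (ν : VectorMeasure X G) : Measure X :=
  Measure.ofMeasurable (fun s _ => vfn ν s) (vfn_empty ν)
    (fun f hm hd => vfn_iUnion ν hm hd)

lemma varMeasure_apply (ν : VectorMeasure X G) {s : Set X} (hs : MeasurableSet s) :
    varMeasure ν s = vfn ν s :=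
  Measure.ofMeasurable_apply s hs

lemma lsum_eq_range (ν : VectorMeasure X G) (l : List (Set X)) :
    lsum ν l = ∑ i ∈ Finset.range l.length, (‖ν (l.getD i ∅)‖₊ : ℝ≥0∞) := by
  induction l with
  | nil => simp [lsum]
  | cons a l ih =>
    rw [show (a :: l).length = l.length + 1 from rfl, Finset.sum_range_succ']
    have h1 : ∀ i : ℕ, (a :: l).getD (i + 1) ∅ = l.getD i ∅ := fun i => rfl
    have h2 : (a :: l).getD 0 ∅ = a := rfl
    simp only [h1, h2]
    rw [← ih]
    simp [lsum, add_comm]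

lemma vfn_le_of_ftv {ν : VectorMeasure X G} {C : ℝ}
    (hC : ∀ S : ℕ → Set X, (∀ i, MeasurableSet (S i)) →
      Pairwise (Function.onFun Disjoint S) →
      ∀ n : ℕ, ∑ i ∈ Finset.range n, ‖ν (S i)‖ ≤ C) (A : Set X) :
    vfn ν A ≤ ENNReal.ofReal C := by
  refine vfn_le fun l hl => ?_
  set S : ℕ → Set X := fun i => l.getD i ∅ with hS
  have hget : ∀ (i : ℕ) (h : i < l.length), S i = l[i] := fun i h =>
    List.getD_eq_getElem l ∅ h
  have hdef : ∀ i : ℕ, l.length ≤ i → S i = ∅ := fun i h => List.getD_eq_default l ∅ h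
  have hmeas : ∀ i, MeasurableSet (S i) := by
    intro i
    by_cases h : i < l.length
    · rw [hget i h]
      exact hl.1 _ (List.getElem_mem h)
    · rw [hdef i (not_lt.1 h)]
      exact MeasurableSet.empty
  have hpair : ∀ i j, i < j → Disjoint (S i) (S j) := by
    intro i j hij
    by_cases hj : j < l.length
    · have hi : i < l.length := lt_trans hij hj
      have := List.pairwise_iff_getElem.1 hl.2.2 i j hi hj hij
      rw [hget i hi, hget j hj]
      exact this
    · rw [hdef j (not_lt.1 hj)]
      exact disjoint_empty _
  have hdisj : Pairwise (Function.onFun Disjoint S) := by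
    intro i j hij
    rcases lt_or_gt_of_ne hij with h | h
    · exact hpair i j h
    · exact (hpair j i h).symm
  have hbound := hC S hmeas hdisj l.length
  have : lsum ν l = ENNReal.ofReal (∑ i ∈ Finset.range l.length, ‖ν (S i)‖) := by
    rw [lsum_eq_range, ENNReal.ofReal_sum_of_nonneg (fun i _ => norm_nonneg _)]
    refine Finset.sum_congr rfl fun i _ => ?_
    exact (ofReal_norm_eq_enorm _).symm
  rw [this]
  exact ENNReal.ofReal_le_ofReal hbound

end VarAux

theorem aux_real {G : Type*} [NormedAddCommGroup G] [CompleteSpace G]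
    (hG : ∀ γ : ℝ → G, ContinuousOn γ (Icc 0 1) → FiniteLengthOn γ 0 1 →
        ∀ s ∈ Icc (0:ℝ) 1, ∀ t ∈ Icc (0:ℝ) 1, γ s = γ t)
    (ρ : VectorMeasure ℝ G) (hftv : HasFiniteTotalVariation ρ) : PurelyAtomic ρ := by
  obtain ⟨C, hC⟩ := hftv
  set lam := VarAux.varMeasure ρ with hlam
  have hvle : ∀ A : Set ℝ, VarAux.vfn ρ A ≤ ENNReal.ofReal C := VarAux.vfn_le_of_ftv hC
  have happ : ∀ {s : Set ℝ}, MeasurableSet s → lam s = VarAux.vfn ρ s := fun hs =>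
    VarAux.varMeasure_apply ρ hs
  haveI : IsFiniteMeasure lam :=
    ⟨by rw [happ MeasurableSet.univ]; exact lt_of_le_of_lt (hvle _) ENNReal.ofReal_lt_top⟩
  set T : Set ℝ := {t : ℝ | 0 < lam {t}} with hT
  have hTc : T.Countable := by
    have := Measure.countable_meas_level_set_pos (μ := lam) (measurable_id (α := ℝ))
    simpa [Set.setOf_eq_eq_singleton] using this
  refine ⟨T, hTc, ?_⟩
  by_contra hcon
  push_neg at hcon
  obtain ⟨B₁, hB₁, hne⟩ := hcon
  set B : Set ℝ := B₁ \ T with hBdef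
  have hB : MeasurableSet B := hB₁.diff hTc.measurableSet
  set μ := lam.restrict B with hμ
  haveI : IsFiniteMeasure μ := inferInstance
  have hμfin : ∀ A : Set ℝ, μ A ≠ ∞ := fun A => measure_ne_top μ A
  have hμatom : ∀ x : ℝ, μ {x} = 0 := by
    intro x
    rw [hμ, Measure.restrict_apply (measurableSet_singleton x)]
    by_cases hx : x ∈ B
    · rw [Set.inter_eq_self_of_subset_left (singleton_subset_iff.2 hx)]
      have h2 : ¬ 0 < lam {x} := hx.2
      simpa [pos_iff_ne_zero, not_not] using h2
    · rw [Set.singleton_inter_eq_empty.2 hx, measure_empty]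
  have hkey : ∀ A : Set ℝ, MeasurableSet A → ‖ρ (B ∩ A)‖ ≤ (μ A).toReal := by
    intro A hA
    have h1 : (‖ρ (B ∩ A)‖₊ : ℝ≥0∞) ≤ VarAux.vfn ρ (B ∩ A) :=
      VarAux.nnnorm_le_vfn ρ (hB.inter hA)
    have h2 : μ A = VarAux.vfn ρ (B ∩ A) := by
      rw [hμ, Measure.restrict_apply hA, Set.inter_comm, happ (hB.inter hA)]
    have h3 : (‖ρ (B ∩ A)‖₊ : ℝ≥0∞) ≤ μ A := h2 ▸ h1
    have := ENNReal.toReal_mono (hμfin A) h3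
    simpa using this
  set f : ℝ → ℝ := fun t => (μ (Iio t)).toReal with hf
  have hfmono : Monotone f := fun s t h =>
    ENNReal.toReal_mono (hμfin _) (measure_mono (Iio_subset_Iio h))
  have hIio : ∀ s t : ℝ, s ≤ t → μ (Iio t) = μ (Iio s) + μ (Ico s t) := by
    intro s t h
    rw [← Iio_union_Ico_eq_Iio h]
    exact measure_union ((Iio_disjoint_Ici le_rfl).mono_right Ico_subset_Ici_self)
      measurableSet_Ico
  have hdiff : ∀ s t : ℝ, s ≤ t → f t - f s = (μ (Ico s t)).toReal := by
    intro s t h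
    rw [hf]
    simp only
    rw [hIio s t h, ENNReal.toReal_add (hμfin _) (hμfin _)]
    ring
  have hbound : ∀ s t : ℝ, s ≤ t → ‖ρ (B ∩ Iio t) - ρ (B ∩ Iio s)‖ ≤ f t - f s := by
    intro s t h
    have hsplit : B ∩ Iio t = (B ∩ Iio s) ∪ (B ∩ Ico s t) := by
      rw [← Set.inter_union_distrib_left, Iio_union_Ico_eq_Iio h]
    have hd : Disjoint (B ∩ Iio s) (B ∩ Ico s t) :=
      ((Iio_disjoint_Ici le_rfl).mono_right Ico_subset_Ici_self).mono
        inter_subset_right inter_subset_right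
    have hu := ρ.of_union hd (hB.inter measurableSet_Iio) (hB.inter measurableSet_Ico)
    rw [← hsplit] at hu
    rw [hu]
    simp only [add_sub_cancel_left]
    rw [hdiff s t h]
    exact hkey _ measurableSet_Ico
  have hfcont : Continuous f := by
    rw [Metric.continuous_iff]
    intro x ε hε
    have hmeas : ∀ n : ℕ, NullMeasurableSet (Ico (x - 1/(n+1)) (x + 1/(n+1))) μ := fun n =>
      measurableSet_Ico.nullMeasurableSet
    have hanti : Antitone fun n : ℕ => Ico (x - 1/((n:ℝ)+1)) (x + 1/((n:ℝ)+1)) := by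
      intro n m hnm
      have h1 : (0:ℝ) < (n:ℝ) + 1 := by positivity
      have h2 : 1/((m:ℝ)+1) ≤ 1/((n:ℝ)+1) := by
        apply one_div_le_one_div_of_le h1
        have : (n:ℝ) ≤ (m:ℝ) := Nat.cast_le.2 hnm
        linarith
      apply Ico_subset_Ico <;> linarith
    have hiInter : (⋂ n : ℕ, Ico (x - 1/((n:ℝ)+1)) (x + 1/((n:ℝ)+1))) = {x} := by
      ext y
      simp only [mem_iInter, mem_Ico, mem_singleton_iff]
      constructor
      · intro h
        have h1 : y ≤ x := by
          by_contra hyx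
          push_neg at hyx
          obtain ⟨n, hn⟩ := exists_nat_one_div_lt (sub_pos.2 hyx)
          have := (h n).2
          linarith
        have h2 : x ≤ y := by
          by_contra hyx
          push_neg at hyx
          obtain ⟨n, hn⟩ := exists_nat_one_div_lt (sub_pos.2 hyx)
          have := (h n).1
          linarith
        linarith
      · rintro rfl
        intro n
        have h1 : (0:ℝ) < 1/((n:ℝ)+1) := by positivity
        constructor <;> linarith
    have htend := tendsto_measure_iInter_atTop hmeas hanti ⟨0, hμfin _⟩
    rw [show ((fun n : ℕ => Ico (x - 1/((n:ℝ)+1)) (x + 1/((n:ℝ)+1)))) = _ from rfl] at htend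
    rw [hiInter, hμatom x] at htend
    obtain ⟨n, hn⟩ :=
      (htend.eventually_lt_const (show (0:ℝ≥0∞) < ENNReal.ofReal ε from
        ENNReal.ofReal_pos.2 hε)).exists
    refine ⟨1/((n:ℝ)+1), by positivity, ?_⟩
    intro y hy
    rw [Real.dist_eq] at hy
    rw [Real.dist_eq]
    have hyx := abs_lt.1 hy
    have hmain : ∀ u v : ℝ, u ≤ v → x - 1/((n:ℝ)+1) ≤ u → v ≤ x + 1/((n:ℝ)+1) →
        f v - f u < ε := by
      intro u v huv hu hv
      rw [hdiff u v huv]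
      have hsub : μ (Ico u v) ≤ μ (Ico (x - 1/((n:ℝ)+1)) (x + 1/((n:ℝ)+1))) :=
        measure_mono (Ico_subset_Ico hu hv)
      exact ENNReal.toReal_lt_of_lt_ofReal (lt_of_le_of_lt hsub hn)
    have hδpos : (0:ℝ) < 1/((n:ℝ)+1) := by positivity
    rcases le_total x y with h | h
    · rw [abs_of_nonneg (sub_nonneg.2 (hfmono h))]
      exact hmain x y h (by linarith) (by linarith)
    · rw [abs_of_nonpos (sub_nonpos.2 (hfmono h)), neg_sub]
      exact hmain y x h (by linarith) (by linarith)
  have hnormB : 0 < ‖ρ B‖ := norm_pos_iff.2 hne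
  set ε := ‖ρ B‖/3 with hε3
  have hεpos : 0 < ε := by positivity
  have htail1 : ∃ n : ℕ, μ (Iio (-(n:ℝ))) < ENNReal.ofReal ε := by
    have hmeas : ∀ n : ℕ, NullMeasurableSet (Iio (-(n:ℝ))) μ := fun n =>
      measurableSet_Iio.nullMeasurableSet
    have hanti : Antitone fun n : ℕ => Iio (-(n:ℝ)) := fun n m hnm =>
      Iio_subset_Iio (by have : (n:ℝ) ≤ (m:ℝ) := Nat.cast_le.2 hnm; linarith)
    have hint : (⋂ n : ℕ, Iio (-(n:ℝ))) = (∅ : Set ℝ) := by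
      ext y
      simp only [mem_iInter, mem_Iio, mem_empty_iff_false, iff_false, not_forall, not_lt]
      obtain ⟨n, hn⟩ := exists_nat_ge (-y)
      exact ⟨n, by linarith⟩
    have := tendsto_measure_iInter_atTop hmeas hanti ⟨0, hμfin _⟩
    rw [hint, measure_empty] at this
    exact (this.eventually_lt_const (ENNReal.ofReal_pos.2 hεpos)).exists
  have htail2 : ∃ n : ℕ, μ (Ici (n:ℝ)) < ENNReal.ofReal ε := by
    have hmeas : ∀ n : ℕ, NullMeasurableSet (Ici ((n:ℝ))) μ := fun n =>
      measurableSet_Ici.nullMeasurableSet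
    have hanti : Antitone fun n : ℕ => Ici ((n:ℝ)) := fun n m hnm =>
      Ici_subset_Ici.2 (Nat.cast_le.2 hnm)
    have hint : (⋂ n : ℕ, Ici ((n:ℝ))) = (∅ : Set ℝ) := by
      ext y
      simp only [mem_iInter, mem_Ici, mem_empty_iff_false, iff_false, not_forall, not_le]
      obtain ⟨n, hn⟩ := exists_nat_gt y
      exact ⟨n, hn⟩
    have := tendsto_measure_iInter_atTop hmeas hanti ⟨0, hμfin _⟩
    rw [hint, measure_empty] at this
    exact (this.eventually_lt_const (ENNReal.ofReal_pos.2 hεpos)).exists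
  obtain ⟨n₁, hn₁⟩ := htail1
  obtain ⟨n₂, hn₂⟩ := htail2
  set k : ℕ := max n₁ n₂ + 1 with hk
  set a : ℝ := -(k:ℝ) with hadef
  set b : ℝ := (k:ℝ) with hbdef
  have hk1 : (1:ℝ) ≤ (k:ℝ) := by
    have : 1 ≤ k := Nat.succ_le_succ (Nat.zero_le _)
    exact_mod_cast this
  have hab : a < b := by rw [hadef, hbdef]; linarith
  have ha : μ (Iio a) < ENNReal.ofReal ε := by
    refine lt_of_le_of_lt (measure_mono (Iio_subset_Iio ?_)) hn₁
    have : (n₁:ℝ) ≤ (k:ℝ) := Nat.cast_le.2 (le_trans (le_max_left _ _) (Nat.le_succ _))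
    rw [hadef]; linarith
  have hb : μ (Ici b) < ENNReal.ofReal ε := by
    refine lt_of_le_of_lt (measure_mono (Ici_subset_Ici.2 ?_)) hn₂
    have : (n₂:ℝ) ≤ (k:ℝ) := Nat.cast_le.2 (le_trans (le_max_right _ _) (Nat.le_succ _))
    rw [hbdef]; linarith
  set γ : ℝ → G := fun t => ρ (B ∩ Iio t) with hγ
  have hγa : ‖γ a‖ < ε := by
    refine lt_of_le_of_lt (hkey _ measurableSet_Iio) ?_
    exact ENNReal.toReal_lt_of_lt_ofReal ha
  have hsplitB : ρ B = γ b + ρ (B ∩ Ici b) := by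
    have hrw : B = (B ∩ Iio b) ∪ (B ∩ Ici b) := by
      rw [← Set.inter_union_distrib_left, Iio_union_Ici, inter_univ]
    have hd : Disjoint (B ∩ Iio b) (B ∩ Ici b) :=
      (Iio_disjoint_Ici le_rfl).mono inter_subset_right inter_subset_right
    have := ρ.of_union hd (hB.inter measurableSet_Iio) (hB.inter measurableSet_Ici)
    rw [← hrw] at this
    exact this
  have hγb : ‖ρ B - γ b‖ < ε := by
    rw [hsplitB]
    simp only [add_sub_cancel_left]
    exact lt_of_le_of_lt (hkey _ measurableSet_Ici) (ENNReal.toReal_lt_of_lt_ofReal hb)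
  have hne2 : γ a ≠ γ b := by
    intro hcontr
    have hsum : ‖ρ B‖ ≤ ‖ρ B - γ b‖ + ‖γ b - γ a‖ + ‖γ a‖ := by
      have hdec : ρ B = (ρ B - γ b) + (γ b - γ a) + γ a := by abel
      calc ‖ρ B‖ = ‖(ρ B - γ b) + (γ b - γ a) + γ a‖ := by rw [← hdec]
        _ ≤ ‖(ρ B - γ b) + (γ b - γ a)‖ + ‖γ a‖ := norm_add_le _ _
        _ ≤ ‖ρ B - γ b‖ + ‖γ b - γ a‖ + ‖γ a‖ := by
            exact add_le_add (norm_add_le _ _) le_rfl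
    have hz : γ b - γ a = 0 := by rw [hcontr]; exact sub_self _
    rw [hz, norm_zero, add_zero] at hsum
    rw [hε3] at hγa hγb
    linarith
  have hγcont : Continuous γ := by
    rw [Metric.continuous_iff]
    intro x ε' hε'
    obtain ⟨δ, hδ, hδ'⟩ := Metric.continuous_iff.1 hfcont x ε' hε'
    refine ⟨δ, hδ, fun y hy => ?_⟩
    have hfy := hδ' y hy
    rcases le_total x y with h | h
    · calc dist (γ y) (γ x) = ‖γ y - γ x‖ := dist_eq_norm _ _
        _ ≤ f y - f x := hbound x y h
        _ ≤ |f y - f x| := le_abs_self _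
        _ = dist (f y) (f x) := (Real.dist_eq _ _).symm
        _ < ε' := hfy
    · calc dist (γ y) (γ x) = ‖γ x - γ y‖ := by rw [dist_comm]; exact dist_eq_norm _ _
        _ ≤ f x - f y := hbound y x h
        _ ≤ |f x - f y| := le_abs_self _
        _ = dist (f y) (f x) := by rw [Real.dist_eq, abs_sub_comm]
        _ < ε' := hfy
  set η : ℝ → G := fun u => γ (a + u * (b - a)) with hη
  have hηcont : ContinuousOn η (Icc 0 1) := by
    apply Continuous.continuousOn
    exact hγcont.comp (continuous_const.add (continuous_id.mul continuous_const))
  have hηlen : FiniteLengthOn η 0 1 := by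
    refine ⟨f b - f a, ?_⟩
    intro m t hmono ht0 htm
    have hba : (0:ℝ) ≤ b - a := le_of_lt (sub_pos.2 hab)
    calc ∑ i ∈ Finset.range m, ‖η (t (i+1)) - η (t i)‖
        ≤ ∑ i ∈ Finset.range m, (f (a + t (i+1) * (b - a)) - f (a + t i * (b - a))) := by
          refine Finset.sum_le_sum fun i _ => ?_
          refine hbound _ _ ?_
          have := mul_le_mul_of_nonneg_right (hmono (Nat.le_succ i)) hba
          linarith
      _ = f (a + t m * (b - a)) - f (a + t 0 * (b - a)) :=
          Finset.sum_range_sub (fun i => f (a + t i * (b - a))) m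
      _ ≤ f b - f a := by
          rw [ht0, htm, show a + 1 * (b - a) = b by ring, show a + 0 * (b - a) = a by ring]
  have h01 := hG η hηcont hηlen 0 ⟨le_rfl, zero_le_one⟩ 1 ⟨zero_le_one, le_rfl⟩
  apply hne2
  have e0 : a + 0 * (b - a) = a := by ring
  have e1 : a + 1 * (b - a) = b := by ring
  rw [hη] at h01
  simpa [e0, e1] using h01

/-- The implication (2) ⟹ (1) of Theorem 7.1 in the case `k = 0`: if every continuous
path of finite length in `G` is constant, then every compactly supported `G`-valued
Borel measure on `ℝ^N` (`N ≥ 1`) of finite total variation is purely atomic. -/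
theorem purelyAtomic_of_no_finite_length_paths
    {G : Type*} [NormedAddCommGroup G] [CompleteSpace G]
    (hG : ∀ γ : ℝ → G, ContinuousOn γ (Icc 0 1) → FiniteLengthOn γ 0 1 →
        ∀ s ∈ Icc (0:ℝ) 1, ∀ t ∈ Icc (0:ℝ) 1, γ s = γ t) :
    ∀ N : ℕ, 1 ≤ N → ∀ ν : VectorMeasure (EuclideanSpace ℝ (Fin N)) G,
      CompactlySupported ν → HasFiniteTotalVariation ν → PurelyAtomic ν := by
  intro N hN ν _hcs hftv
  haveI : Uncountable (EuclideanSpace ℝ (Fin N)) := by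
    have hinj : Function.Injective
        (fun r : ℝ => (WithLp.toLp 2 (fun _ => r) : EuclideanSpace ℝ (Fin N))) := by
      intro r s h
      exact congrFun (congrArg WithLp.ofLp h) ⟨0, hN⟩
    exact hinj.uncountable
  let e : EuclideanSpace ℝ (Fin N) ≃ᵐ ℝ :=
    PolishSpace.measurableEquivOfNotCountable not_countable not_countable
  set ρ : VectorMeasure ℝ G := ν.map e with hρ
  have hmap : ∀ {s : Set ℝ}, MeasurableSet s → ρ s = ν (e ⁻¹' s) := fun hs =>
    VectorMeasure.map_apply ν e.measurable hs
  have hftvρ : HasFiniteTotalVariation ρ := by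
    obtain ⟨C, hC⟩ := hftv
    refine ⟨C, fun S hS hd n => ?_⟩
    have h1 := hC (fun i => e ⁻¹' S i) (fun i => e.measurable (hS i))
      (fun i j hij => Disjoint.preimage _ (hd hij)) n
    refine le_trans (le_of_eq ?_) h1
    refine Finset.sum_congr rfl fun i _ => ?_
    rw [hmap (hS i)]
  obtain ⟨S, hSc, hS⟩ := aux_real hG ρ hftvρ
  refine ⟨e ⁻¹' S, hSc.preimage e.injective, ?_⟩
  intro Bset hBset
  have hBm : MeasurableSet ((e.symm ⁻¹' Bset) \ S) :=
    (e.symm.measurable hBset).diff hSc.measurableSet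
  have h0 := hS _ (e.symm.measurable hBset)
  rw [hmap hBm] at h0
  have heq : e ⁻¹' ((e.symm ⁻¹' Bset) \ S) = Bset \ (e ⁻¹' S) := by
    ext x
    simp [e.symm_apply_apply]
  rw [heq] at h0
  exact h0
end
end

section
/- Let G be a complete normed abelian group, let ν be a G-valued Borel measure on ℝ^N, let μ be a finite Borel measure on ℝ^N such that ‖ν(B)‖ ≤ μ(B) for every Borel set B, and let L : ℝ^N → ℝ be a linear map such that μ(L⁻¹{s}) = 0 for every s ∈ ℝ. Define γ : ℝ → G by γ(t) = ν(L⁻¹((−∞, t])). Then: (i) γ is continuous; (ii) γ has length at most μ(ℝ^N), i.e., ∑_{i=1}^m ‖γ(tᵢ) − γ(tᵢ₋₁)‖ ≤ μ(ℝ^N) for every finite sequence t₀ ≤ t₁ ≤ … ≤ t_m of reals; (iii) γ(t) → 0 as t → −∞; and (iv) γ(t) → ν(ℝ^N) as t → +∞. In particular, if ν(ℝ^N) ≠ 0 then γ is a nonconstant continuous path of finite length in G. (This is the path construction in the proof of the implication (2) ⟹ (1) of Theorem 7.1.) -/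
open MeasureTheory Set Topology Filter

/-- The path construction in the proof of (2) ⟹ (1) of Theorem 7.1: if `ν` is a
`G`-valued Borel measure dominated by a finite Borel measure `μ` that gives no mass
to the level sets of a linear map `L : ℝ^N → ℝ`, then `γ(t) = ν(L⁻¹(-∞, t])` is
continuous, has length at most `μ(ℝ^N)`, tends to `0` at `-∞` and to `ν(ℝ^N)` at `+∞`;
in particular if `ν(ℝ^N) ≠ 0` then `γ` is a nonconstant continuous path of finite
length in `G`. -/
theorem path_construction_from_vectorMeasure
    {G : Type*} [NormedAddCommGroup G] [CompleteSpace G] (N : ℕ)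
    (ν : VectorMeasure (EuclideanSpace ℝ (Fin N)) G)
    (μ : Measure (EuclideanSpace ℝ (Fin N))) [IsFiniteMeasure μ]
    (hdom : ∀ B : Set (EuclideanSpace ℝ (Fin N)), MeasurableSet B → ‖ν B‖ ≤ (μ B).toReal)
    (L : EuclideanSpace ℝ (Fin N) →ₗ[ℝ] ℝ)
    (hL : ∀ s : ℝ, μ (L ⁻¹' {s}) = 0)
    (γ : ℝ → G) (hγ : ∀ t : ℝ, γ t = ν (L ⁻¹' Iic t)) :
    Continuous γ ∧
    (∀ (m : ℕ) (t : ℕ → ℝ), Monotone t →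
      ∑ i ∈ Finset.range m, ‖γ (t (i + 1)) - γ (t i)‖ ≤ (μ univ).toReal) ∧
    Filter.Tendsto γ Filter.atBot (nhds 0) ∧
    Filter.Tendsto γ Filter.atTop (nhds (ν univ)) ∧
    (ν univ ≠ 0 → ∃ s t : ℝ, γ s ≠ γ t) := by
  have hLc : Continuous L := L.continuous_of_finiteDimensional
  have hLm : Measurable L := hLc.measurable
  have hM : ∀ s : Set ℝ, MeasurableSet s → MeasurableSet (L ⁻¹' s) := fun s hs => hLm hs
  have hdiff : ∀ s t : ℝ, s ≤ t → γ t - γ s = ν (L ⁻¹' Ioc s t) := by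
    intro s t hst
    have hsplit : L ⁻¹' Iic t = L ⁻¹' Iic s ∪ L ⁻¹' Ioc s t := by
      rw [← preimage_union, Iic_union_Ioc_eq_Iic hst]
    rw [hγ, hγ, hsplit,
      ν.of_union ((Iic_disjoint_Ioc le_rfl).preimage L) (hM _ measurableSet_Iic)
        (hM _ measurableSet_Ioc)]
    abel
  have hbound : ∀ s t : ℝ, s ≤ t → ‖γ t - γ s‖ ≤ (μ (L ⁻¹' Ioc s t)).toReal := by
    intro s t hst
    rw [hdiff s t hst]
    exact hdom _ (hM _ measurableSet_Ioc)
  -- continuity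
  have hcont : Continuous γ := by
    rw [Metric.continuous_iff]
    intro x ε hε
    have hanti : Antitone (fun n : ℕ => L ⁻¹' Icc (x - 1 / (n + 1)) (x + 1 / (n + 1))) := by
      intro a b hab
      apply preimage_mono
      apply Icc_subset_Icc <;>
      · have h1 : (1 : ℝ) / (b + 1) ≤ 1 / (a + 1) := by
          apply one_div_le_one_div_of_le
          · positivity
          · exact_mod_cast by linarith
        linarith
    have hIcc : (⋂ n : ℕ, Icc (x - 1 / (n + 1 : ℝ)) (x + 1 / (n + 1))) = {x} := by
      ext y
      simp only [mem_iInter, mem_Icc, mem_singleton_iff]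
      constructor
      · intro h
        have h1 : ∀ n : ℕ, |y - x| ≤ 1 / (n + 1) := by
          intro n
          rw [abs_le]
          exact ⟨by linarith [(h n).1], by linarith [(h n).2]⟩
        have h2 : |y - x| ≤ 0 := by
          by_contra h2
          push_neg at h2
          obtain ⟨n, hn⟩ := exists_nat_one_div_lt h2
          exact absurd (h1 n) (by linarith)
        have h3 : |y - x| = 0 := le_antisymm h2 (abs_nonneg _)
        have := abs_eq_zero.mp h3
        linarith
      · rintro rfl n
        have : (0:ℝ) < 1 / (n + 1) := by positivity
        constructor <;> linarith
    have hInter : (⋂ n : ℕ, L ⁻¹' Icc (x - 1 / (n + 1 : ℝ)) (x + 1 / (n + 1))) = L ⁻¹' {x} := by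
      rw [← preimage_iInter, hIcc]
    have hT : Filter.Tendsto
        (μ ∘ fun n : ℕ => L ⁻¹' Icc (x - 1 / (n + 1)) (x + 1 / (n + 1)))
        Filter.atTop (𝓝 (μ (L ⁻¹' {x}))) :=
      hInter ▸ tendsto_measure_iInter_atTop
        (fun n => (hM _ measurableSet_Icc).nullMeasurableSet) hanti
        ⟨0, measure_ne_top μ _⟩
    rw [hL x] at hT
    have hεpos : (0 : ENNReal) < ENNReal.ofReal ε := by simpa using hε
    obtain ⟨n, hn⟩ := (hT.eventually_lt_const hεpos).exists
    refine ⟨1 / (n + 1), by positivity, fun y hy => ?_⟩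
    have hsub : ∀ a b : ℝ, a ≤ b → dist a x < 1 / (n+1) → dist b x < 1/(n+1) →
        Ioc a b ⊆ Icc (x - 1 / (n + 1)) (x + 1 / (n + 1)) := by
      intro a b hab ha hb z hz
      rw [Real.dist_eq, abs_lt] at ha hb
      exact ⟨by cases hz; linarith [ha.1], by cases hz; linarith [hb.2]⟩
    have key : ∀ a b : ℝ, a ≤ b → dist a x < 1/(n+1) → dist b x < 1/(n+1) →
        ‖γ b - γ a‖ < ε := by
      intro a b hab ha hb
      calc ‖γ b - γ a‖ ≤ (μ (L ⁻¹' Ioc a b)).toReal := hbound a b hab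
        _ ≤ (μ (L ⁻¹' Icc (x - 1 / (n + 1)) (x + 1 / (n + 1)))).toReal :=
            ENNReal.toReal_mono (measure_ne_top μ _)
              (measure_mono (preimage_mono (hsub a b hab ha hb)))
        _ < ε := ENNReal.toReal_lt_of_lt_ofReal hn
    rw [dist_eq_norm]
    have hxx : dist x x < 1 / (n + 1 : ℝ) := by rw [dist_self]; positivity
    rcases le_total y x with h | h
    · rw [← norm_neg]; simpa using key y x h hy hxx
    · exact key x y h hxx hy
  -- length bound
  have hlen : ∀ (m : ℕ) (t : ℕ → ℝ), Monotone t →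
      ∑ i ∈ Finset.range m, ‖γ (t (i + 1)) - γ (t i)‖ ≤ (μ univ).toReal := by
    intro m t ht
    have hle : ∑ i ∈ Finset.range m, ‖γ (t (i + 1)) - γ (t i)‖ ≤
        ∑ i ∈ Finset.range m, (μ (L ⁻¹' Ioc (t i) (t (i+1)))).toReal :=
      Finset.sum_le_sum fun i _ => hbound _ _ (ht (Nat.le_succ i))
    refine hle.trans ?_
    rw [← ENNReal.toReal_sum (fun i _ => measure_ne_top μ _)]
    refine ENNReal.toReal_mono (measure_ne_top μ _) ?_
    have hd : ∀ i j : ℕ, i < j →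
        Disjoint (L ⁻¹' Ioc (t i) (t (i+1))) (L ⁻¹' Ioc (t j) (t (j+1))) := by
      intro i j hlt
      have hmono : t (i + 1) ≤ t j := ht hlt
      refine Disjoint.preimage L ?_
      rw [Set.disjoint_left]
      rintro z ⟨hz1, hz2⟩ ⟨hz3, hz4⟩
      exact absurd hz3 (by linarith)
    have hdisj : (Finset.range m : Set ℕ).PairwiseDisjoint
        (fun i => L ⁻¹' Ioc (t i) (t (i+1))) := by
      intro i _ j _ hij
      rcases lt_or_gt_of_ne hij with h | h
      · exact hd i j h
      · exact (hd j i h).symm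
    rw [← measure_biUnion_finset hdisj (fun i _ => hM _ measurableSet_Ioc)]
    exact measure_mono (subset_univ _)
  -- atBot
  have hbot : Filter.Tendsto γ Filter.atBot (𝓝 0) := by
    rw [tendsto_iff_norm_sub_tendsto_zero]
    refine squeeze_zero (g := fun t => (μ (L ⁻¹' Iic t)).toReal)
      (fun t => norm_nonneg _) (fun t => ?_) ?_
    · rw [sub_zero, hγ]
      exact hdom _ (hM _ measurableSet_Iic)
    · have hInter : (⋂ t : ℝ, L ⁻¹' Iic t) = ∅ := by
        rw [← preimage_iInter]
        have : (⋂ t : ℝ, Iic t) = (∅ : Set ℝ) := by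
          ext y
          simp only [mem_iInter, mem_Iic, mem_empty_iff_false, iff_false, not_forall, not_le]
          exact ⟨y - 1, by linarith⟩
        rw [this, preimage_empty]
      have hT : Filter.Tendsto (μ ∘ fun t : ℝ => L ⁻¹' Iic t) Filter.atBot
          (𝓝 (μ (⋂ t : ℝ, L ⁻¹' Iic t))) :=
        tendsto_measure_iInter_atBot
          (fun t => (hM _ measurableSet_Iic).nullMeasurableSet)
          (fun a b hab => preimage_mono (Iic_subset_Iic.mpr hab))
          ⟨0, measure_ne_top μ _⟩
      rw [hInter, measure_empty] at hT
      have := (ENNReal.tendsto_toReal (by simp)).comp hT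
      simpa [Function.comp_def] using this
  -- atTop
  have hν_univ : ∀ t : ℝ, ν univ - γ t = ν (L ⁻¹' Ioi t) := by
    intro t
    have hsplit : (univ : Set (EuclideanSpace ℝ (Fin N))) = L ⁻¹' Iic t ∪ L ⁻¹' Ioi t := by
      rw [← preimage_union, Iic_union_Ioi, preimage_univ]
    rw [hγ, hsplit,
      ν.of_union ((Iic_disjoint_Ioi le_rfl).preimage L) (hM _ measurableSet_Iic)
        (hM _ measurableSet_Ioi)]
    abel
  have htop : Filter.Tendsto γ Filter.atTop (𝓝 (ν univ)) := by
    rw [tendsto_iff_norm_sub_tendsto_zero]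
    refine squeeze_zero (g := fun t => (μ (L ⁻¹' Ioi t)).toReal)
      (fun t => norm_nonneg _) (fun t => ?_) ?_
    · rw [← norm_neg, neg_sub, hν_univ t]
      exact hdom _ (hM _ measurableSet_Ioi)
    · have hInter : (⋂ t : ℝ, L ⁻¹' Ioi t) = ∅ := by
        rw [← preimage_iInter]
        have : (⋂ t : ℝ, Ioi t) = (∅ : Set ℝ) := by
          ext y
          simp only [mem_iInter, mem_Ioi, mem_empty_iff_false, iff_false, not_forall, not_lt]
          exact ⟨y, le_rfl⟩
        rw [this, preimage_empty]
      have hT : Filter.Tendsto (μ ∘ fun t : ℝ => L ⁻¹' Ioi t) Filter.atTop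
          (𝓝 (μ (⋂ t : ℝ, L ⁻¹' Ioi t))) :=
        tendsto_measure_iInter_atTop
          (fun t => (hM _ measurableSet_Ioi).nullMeasurableSet)
          (fun a b hab => preimage_mono (Ioi_subset_Ioi hab))
          ⟨0, measure_ne_top μ _⟩
      rw [hInter, measure_empty] at hT
      have := (ENNReal.tendsto_toReal (by simp)).comp hT
      simpa [Function.comp_def] using this
  refine ⟨hcont, hlen, hbot, htop, fun hne => ?_⟩
  by_contra h
  push_neg at h
  have hconst : γ = fun _ => γ 0 := funext fun s => h s 0
  rw [hconst] at hbot htop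
  have h1 : γ 0 = 0 := tendsto_nhds_unique tendsto_const_nhds hbot
  have h2 : γ 0 = ν univ := tendsto_nhds_unique tendsto_const_nhds htop
  exact hne (h2 ▸ h1 ▸ rfl)
end

section
/- Let G be a complete normed abelian group for which there exists ε > 0 with ‖g‖ ≥ ε for every g ≠ 0 (for example G = ℤ with the usual norm, or any finite normed group). Then for every N ≥ 1, every compactly supported G-valued Borel measure on ℝ^N with finite total variation is purely atomic. (This is the 0-dimensional case of the rectifiability theorem for flat chains over such coefficient groups, as noted in the introduction and following Theorem 7.1.) -/
open MeasureTheory Set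

lemma vm_split {X : Type*} [MeasurableSpace X] {G : Type*} [NormedAddCommGroup G]
    (ν : VectorMeasure X G) (s : Finset (Set X)) (hs : ∀ U ∈ s, MeasurableSet U) :
    ∀ A : Set X, MeasurableSet A → ν A ≠ 0 →
      ν (A \ ⋃ U ∈ s, U) ≠ 0 ∨
        ∃ B, MeasurableSet B ∧ B ⊆ A ∧ (∃ U ∈ s, B ⊆ U) ∧ ν B ≠ 0 := by
  classical
  induction s using Finset.induction_on with
  | empty => intro A hA hν; left; simpa using hν
  | @insert U s hUs ih =>
    intro A hA hν
    have hU : MeasurableSet U := hs U (by simp)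
    by_cases h : ν (A ∩ U) = 0
    · have hdisj : Disjoint (A ∩ U) (A \ U) :=
        disjoint_sdiff_self_right.mono_left inter_subset_right
      have hAU : ν A = ν (A ∩ U) + ν (A \ U) := by
        rw [← ν.of_union hdisj (hA.inter hU) (hA.diff hU), Set.inter_union_diff]
      have h2 : ν (A \ U) ≠ 0 := by
        intro h0; rw [hAU, h, h0, add_zero] at hν; exact hν rfl
      rcases ih (fun V hV => hs V (by simp [hV])) (A \ U) (hA.diff hU) h2 with h3 | h3
      · left
        have : (A \ U) \ ⋃ V ∈ s, V = A \ ⋃ V ∈ insert U s, V := by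
          ext x; simp only [Set.mem_diff, Set.mem_iUnion, Finset.mem_insert]
          constructor
          · rintro ⟨⟨hxA, hxU⟩, hV⟩
            exact ⟨hxA, by rintro ⟨V, (rfl | hVs), hxV⟩; exacts [hxU hxV, hV ⟨V, hVs, hxV⟩]⟩
          · rintro ⟨hxA, hV⟩
            exact ⟨⟨hxA, fun hxU => hV ⟨U, Or.inl rfl, hxU⟩⟩,
              fun ⟨V, hVs, hxV⟩ => hV ⟨V, Or.inr hVs, hxV⟩⟩
        rwa [this] at h3
      · right
        obtain ⟨B, h4, h5, ⟨V, hVs, h6⟩, h7⟩ := h3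
        exact ⟨B, h4, h5.trans diff_subset, ⟨V, by simp [hVs], h6⟩, h7⟩
    · right
      exact ⟨A ∩ U, hA.inter hU, inter_subset_left, ⟨U, by simp, inter_subset_right⟩, h⟩

theorem purelyAtomic_aux
    {G : Type*} [NormedAddCommGroup G] [CompleteSpace G]
    (ε : ℝ) (hε : 0 < ε) (hG : ∀ g : G, g ≠ 0 → ε ≤ ‖g‖)
    {X : Type*} [MeasurableSpace X] [MetricSpace X] [OpensMeasurableSpace X]
    (ν : VectorMeasure X G) (K : Set X) (hK : IsCompact K)
    (hKnull : ∀ B : Set X, MeasurableSet B → Disjoint B K → ν B = 0) :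
    ∃ S : Set X, S.Countable ∧ ∀ B : Set X, MeasurableSet B → ν (B \ S) = 0 := by
  classical
  set S : Set X := {x : X | ν {x} ≠ 0} with hSdef
  -- S is finite
  have hSfin : S.Finite := by
    by_contra hfin
    have hinf : S.Infinite := hfin
    let e := hinf.natEmbedding
    have hdisj : Pairwise (Function.onFun Disjoint fun n : ℕ => ({(e n : X)} : Set X)) := by
      intro i j hij
      simp only [Function.onFun, Set.disjoint_singleton]
      exact fun h => hij (e.injective (Subtype.ext h))
    have hsum := ν.m_iUnion (f := fun n : ℕ => ({(e n : X)} : Set X))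
      (fun n => measurableSet_singleton _) hdisj
    have htend := hsum.summable.tendsto_atTop_zero
    rw [Metric.tendsto_atTop] at htend
    obtain ⟨n, hn⟩ := htend ε hε
    have h1 := hn n le_rfl
    rw [dist_zero_right] at h1
    exact absurd (hG _ (e n).2) (not_le.mpr h1)
  refine ⟨S, hSfin.countable, ?_⟩
  intro B hB
  by_contra hne0
  have hSmeas : MeasurableSet S := hSfin.measurableSet
  have hBS : MeasurableSet (B \ S) := hB.diff hSmeas
  -- step: subdivide
  have step : ∀ A : Set X, MeasurableSet A → ν A ≠ 0 → ∀ r : ℝ, 0 < r →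
      ∃ A', MeasurableSet A' ∧ A' ⊆ A ∧ (∃ c, A' ⊆ Metric.ball c r) ∧ ν A' ≠ 0 := by
    intro A hA hνA r hr
    obtain ⟨t, ht⟩ := hK.elim_finite_subcover (fun x : X => Metric.ball x r)
      (fun _ => Metric.isOpen_ball)
      (fun x hx => Set.mem_iUnion.2 ⟨x, Metric.mem_ball_self hr⟩)
    set s : Finset (Set X) := t.image (fun c => Metric.ball c r) with hsdef
    have hsm : ∀ U ∈ s, MeasurableSet U := by
      intro U hU
      obtain ⟨c, _, rfl⟩ := Finset.mem_image.1 hU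
      exact measurableSet_ball
    rcases vm_split ν s hsm A hA hνA with h | h
    · exfalso
      apply h
      apply hKnull
      · exact hA.diff (s.measurableSet_biUnion (fun U hU => hsm U hU))
      · rw [Set.disjoint_left]
        rintro x ⟨hxA, hxW⟩ hxK
        apply hxW
        obtain ⟨c, hct, hxc⟩ := Set.mem_iUnion₂.1 (ht hxK)
        exact Set.mem_iUnion₂.2 ⟨Metric.ball c r, Finset.mem_image_of_mem _ hct, hxc⟩
    · obtain ⟨A', h1, h2, ⟨U, hUs, h3⟩, h4⟩ := h
      obtain ⟨c, _, rfl⟩ := Finset.mem_image.1 hUs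
      exact ⟨A', h1, h2, ⟨c, h3⟩, h4⟩
  -- recursive construction
  obtain ⟨g, hg0, hgm, hgn, hgs⟩ : ∃ g : ℕ → Set X, g 0 = B \ S ∧
      (∀ n, MeasurableSet (g n)) ∧ (∀ n, ν (g n) ≠ 0) ∧
      ∀ n, g (n + 1) ⊆ g n ∧ ∃ c, g (n + 1) ⊆ Metric.ball c ((1/2) ^ n) := by
    have key : ∀ (n : ℕ) (p : {A : Set X // MeasurableSet A ∧ ν A ≠ 0}),
        ∃ q : {A : Set X // MeasurableSet A ∧ ν A ≠ 0},
          q.1 ⊆ p.1 ∧ ∃ c, q.1 ⊆ Metric.ball c ((1/2) ^ n) := by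
      intro n p
      obtain ⟨A', h1, h2, h3, h4⟩ := step p.1 p.2.1 p.2.2 ((1/2) ^ n) (by positivity)
      exact ⟨⟨A', h1, h4⟩, h2, h3⟩
    let g' : ℕ → {A : Set X // MeasurableSet A ∧ ν A ≠ 0} :=
      fun n => Nat.rec ⟨B \ S, hBS, hne0⟩ (fun n p => (key n p).choose) n
    exact ⟨fun n => (g' n).1, rfl, fun n => (g' n).2.1, fun n => (g' n).2.2,
      fun n => (key n (g' n)).choose_spec⟩
  have hanti : Antitone g := antitone_nat_of_succ_le (fun n => (hgs n).1)
  -- telescoping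
  set d : ℕ → Set X := fun n => g n \ g (n + 1) with hddef
  have hdm : ∀ n, MeasurableSet (d n) := fun n => (hgm n).diff (hgm (n + 1))
  have hddisj : Pairwise (Function.onFun Disjoint d) := by
    intro i j hij
    rcases lt_or_gt_of_ne hij with h | h
    · exact Set.disjoint_left.2 fun x hxi hxj =>
        hxi.2 (hanti (Nat.succ_le_of_lt h) hxj.1)
    · exact Set.disjoint_left.2 fun x hxi hxj =>
        hxj.2 (hanti (Nat.succ_le_of_lt h) hxi.1)
  have hsum := ν.m_iUnion hdm hddisj
  have htel : ∀ m, (ν (g m) : G) = ν (g 0) - ∑ i ∈ Finset.range m, ν (d i) := by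
    intro m
    induction m with
    | zero => simp
    | succ m ih =>
      have : (ν (g m) : G) = ν (g (m + 1)) + ν (d m) := by
        rw [← ν.of_union disjoint_sdiff_self_right (hgm (m + 1)) (hdm m),
          Set.union_diff_cancel (hgs m).1]
      have h4 : (ν (g (m + 1)) : G) = ν (g m) - ν (d m) := by rw [this]; abel
      rw [Finset.sum_range_succ, h4, ih]; abel
  have hIm : MeasurableSet (⋂ n, g n) := MeasurableSet.iInter (fun n => hgm n)
  have hiUd : (⋃ n, d n) = g 0 \ ⋂ n, g n := by
    ext x
    simp only [Set.mem_iUnion, Set.mem_diff, Set.mem_iInter, hddef]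
    constructor
    · rintro ⟨n, hx1, hx2⟩
      exact ⟨hanti (Nat.zero_le n) hx1, fun h => hx2 (h (n + 1))⟩
    · rintro ⟨hx0, hx⟩
      push_neg at hx
      have hn0 : Nat.find hx ≠ 0 := fun h => Nat.find_spec hx (h ▸ hx0)
      obtain ⟨m, hm⟩ := Nat.exists_eq_succ_of_ne_zero hn0
      have hspec := Nat.find_spec hx
      rw [hm] at hspec
      exact ⟨m, not_not.1 (Nat.find_min hx (by omega)), hspec⟩
  have hsplit : (ν (g 0) : G) = ν (⋂ n, g n) + ν (g 0 \ ⋂ n, g n) := by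
    rw [← ν.of_union disjoint_sdiff_self_right hIm ((hgm 0).diff hIm),
      Set.union_diff_cancel (Set.iInter_subset g 0)]
  have hlim : Filter.Tendsto (fun m => (ν (g m) : G)) Filter.atTop
      (nhds (ν (⋂ n, g n))) := by
    have h1 := hsum.tendsto_sum_nat
    have h2 : Filter.Tendsto (fun m => (ν (g 0) : G) - ∑ i ∈ Finset.range m, ν (d i))
        Filter.atTop (nhds (ν (g 0) - ν (⋃ n, d n))) := Filter.Tendsto.const_sub _ h1
    have h3 : (ν (g 0) : G) - ν (⋃ n, d n) = ν (⋂ n, g n) := by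
      rw [hiUd, hsplit]; abel
    rw [h3] at h2
    exact h2.congr (fun m => (htel m).symm)
  have hnormI : ε ≤ ‖(ν (⋂ n, g n) : G)‖ :=
    ge_of_tendsto' hlim.norm (fun m => hG _ (hgn m))
  have hIne : (ν (⋂ n, g n) : G) ≠ 0 := fun h => by
    rw [h, norm_zero] at hnormI; linarith
  have hInonempty : (⋂ n, g n).Nonempty := by
    by_contra h
    rw [Set.not_nonempty_iff_eq_empty] at h
    rw [h] at hIne
    exact hIne (ν.empty)
  obtain ⟨x, hx⟩ := hInonempty
  have hsub : (⋂ n, g n) ⊆ {x} := by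
    intro y hy
    have hd : ∀ n : ℕ, dist y x ≤ 2 * (1/2 : ℝ) ^ n := by
      intro n
      obtain ⟨c, hc⟩ := (hgs n).2
      have hyc : dist y c < (1/2 : ℝ) ^ n :=
        Metric.mem_ball.1 (hc (Set.mem_iInter.1 hy (n + 1)))
      have hxc : dist x c < (1/2 : ℝ) ^ n :=
        Metric.mem_ball.1 (hc (Set.mem_iInter.1 hx (n + 1)))
      calc dist y x ≤ dist y c + dist c x := dist_triangle y c x
        _ ≤ 2 * (1/2 : ℝ) ^ n := by rw [dist_comm c x]; linarith
    have htend0 : Filter.Tendsto (fun n : ℕ => 2 * (1/2 : ℝ) ^ n) Filter.atTop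
        (nhds 0) := by
      have := tendsto_pow_atTop_nhds_zero_of_lt_one (by norm_num : (0:ℝ) ≤ 1/2)
        (by norm_num : (1/2 : ℝ) < 1)
      simpa using this.const_mul 2
    have : dist y x ≤ 0 := ge_of_tendsto' htend0 hd
    simpa [Set.mem_singleton_iff] using dist_le_zero.1 this
  have hIeq : (⋂ n, g n) = {x} :=
    Set.Subset.antisymm hsub (Set.singleton_subset_iff.2 hx)
  have hxS : x ∈ S := by rw [hSdef]; rw [hIeq] at hIne; exact hIne
  have hxBS : x ∈ B \ S := hg0 ▸ Set.mem_iInter.1 hx 0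
  exact hxBS.2 hxS

/-- The 0-dimensional rectifiability theorem for coefficient groups in which the norm
of nonzero elements is bounded away from `0` (e.g. `ℤ` or any finite normed group):
every compactly supported `G`-valued Borel measure on `ℝ^N` (`N ≥ 1`) of finite total
variation is purely atomic. -/
theorem purelyAtomic_of_norm_bounded_below
    {G : Type*} [NormedAddCommGroup G] [CompleteSpace G]
    (ε : ℝ) (hε : 0 < ε) (hG : ∀ g : G, g ≠ 0 → ε ≤ ‖g‖) :
    ∀ N : ℕ, 1 ≤ N → ∀ ν : VectorMeasure (EuclideanSpace ℝ (Fin N)) G,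
      CompactlySupported ν → HasFiniteTotalVariation ν → PurelyAtomic ν := by
  rintro N _ ν ⟨K, hK, hKnull⟩ _
  exact purelyAtomic_aux ε hε hG ν K hK hKnull
end
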